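/- Let 𝕄 = ((G, M, I, R_□, R_◇), V) be a polarity-based model for the basic non-distributive modal logic, and let Win be the set of positions winning for ∃ in the evaluation game, defined as the least fixed point of the monotone operator F on sets of positions given by: an ∃-position is in F(W) iff some admissible move from it lies in W, and a ∀-position is in F(W) iff every admissible move from it lies in W (this corresponds to the game in which a player with no admissible move loses and infinite plays are won by ∀). Then for every formula φ of the basic non-distributive modal language and all g ∈ G, m ∈ M: (g, φ) ∈ Win if and only if 𝕄, g ⊩ φ, and (m, φ) ∈ Win if and only if 𝕄, m ⊁ φ. -/

import Mathlib

/-- Formulas of the basic non-distributive modal logic. -/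
inductive NDForm (P : Type*) : Type _
  | bot : NDForm P
  | top : NDForm P
  | atom : P → NDForm P
  | and : NDForm P → NDForm P → NDForm P
  | or : NDForm P → NDForm P → NDForm P
  | box : NDForm P → NDForm P
  | dia : NDForm P → NDForm P

namespace NDForm

variable {P G M : Type*}

/-- The pair (extension, intension) interpreting a formula of the basic non-distributive
modal logic in a polarity-based model: `g ⊩ φ` iff `g ∈ (sem ... φ).1` and `m ≻ φ` iff
`m ∈ (sem ... φ).2`, following the recursive forcing clauses. -/
def sem (I : G → M → Prop) (Rbox : G → M → Prop) (Rdia : M → G → Prop)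
    (V : P → Concept G M I) : NDForm P → Set G × Set M
  | bot => ({g | ∀ m, I g m}, Set.univ)
  | top => (Set.univ, {m | ∀ g, I g m})
  | atom p => ((V p).extent, (V p).intent)
  | NDForm.and φ ψ =>
      ((sem I Rbox Rdia V φ).1 ∩ (sem I Rbox Rdia V ψ).1,
       {m | ∀ g ∈ (sem I Rbox Rdia V φ).1 ∩ (sem I Rbox Rdia V ψ).1, I g m})
  | NDForm.or φ ψ =>
      ({g | ∀ m ∈ (sem I Rbox Rdia V φ).2 ∩ (sem I Rbox Rdia V ψ).2, I g m},
       (sem I Rbox Rdia V φ).2 ∩ (sem I Rbox Rdia V ψ).2)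
  | box φ =>
      ({g | ∀ m ∈ (sem I Rbox Rdia V φ).2, Rbox g m},
       {m | ∀ g, (∀ m' ∈ (sem I Rbox Rdia V φ).2, Rbox g m') → I g m})
  | dia φ =>
      ({g | ∀ m, (∀ g' ∈ (sem I Rbox Rdia V φ).1, Rdia m g') → I g m},
       {m | ∀ g ∈ (sem I Rbox Rdia V φ).1, Rdia m g})

end NDForm

/-- Positions of the evaluation game: pairs `(g, φ)` (where `∀` moves) and
pairs `(m, φ)` (where `∃` moves). -/
inductive GamePos (G M P : Type*) : Type _
  | obj : G → NDForm P → GamePos G M P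
  | att : M → NDForm P → GamePos G M P

namespace GamePos

variable {P G M : Type*}

/-- The admissible moves of the evaluation game for basic non-distributive modal logic. -/
def moves (I : G → M → Prop) (Rbox : G → M → Prop) (Rdia : M → G → Prop)
    (V : P → Concept G M I) : GamePos G M P → Set (GamePos G M P)
  | obj g (NDForm.atom p) =>
      {q | g ∉ (V p).extent ∧ ∃ m, ¬ I g m ∧ q = att m (NDForm.atom p)}
  | att m (NDForm.atom p) =>
      {q | m ∉ (V p).intent ∧ ∃ g, ¬ I g m ∧ q = obj g (NDForm.atom p)}
  | obj _ NDForm.top => ∅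
  | att _ NDForm.bot => ∅
  | obj g NDForm.bot => {q | ∃ m, ¬ I g m ∧ q = att m NDForm.bot}
  | att m NDForm.top => {q | ∃ g, ¬ I g m ∧ q = obj g NDForm.top}
  | att m (NDForm.or φ ψ) => {att m φ, att m ψ}
  | obj g (NDForm.or φ ψ) => {q | ∃ m, ¬ I g m ∧ q = att m (NDForm.or φ ψ)}
  | obj g (NDForm.and φ ψ) => {obj g φ, obj g ψ}
  | att m (NDForm.and φ ψ) => {q | ∃ g, ¬ I g m ∧ q = obj g (NDForm.and φ ψ)}
  | att m (NDForm.dia φ) => {q | ∃ g, ¬ Rdia m g ∧ q = obj g φ}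
  | obj g (NDForm.dia φ) => {q | ∃ m, ¬ I g m ∧ q = att m (NDForm.dia φ)}
  | obj g (NDForm.box φ) => {q | ∃ m, ¬ Rbox g m ∧ q = att m φ}
  | att m (NDForm.box φ) => {q | ∃ g, ¬ I g m ∧ q = obj g (NDForm.box φ)}

/-- The one-step game operator `F`: an `∃`-position (of the form `(m, φ)`) belongs to `F W`
iff some admissible move from it lies in `W`; a `∀`-position (of the form `(g, φ)`) belongs
to `F W` iff every admissible move from it lies in `W`. -/
def gameOp (I : G → M → Prop) (Rbox : G → M → Prop) (Rdia : M → G → Prop)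
    (V : P → Concept G M I) (W : Set (GamePos G M P)) : Set (GamePos G M P) :=
  {p | match p with
    | obj g φ => ∀ q ∈ moves I Rbox Rdia V (obj g φ), q ∈ W
    | att m φ => ∃ q ∈ moves I Rbox Rdia V (att m φ), q ∈ W}

end GamePos

section Aux

variable {P G M : Type*} (I : G → M → Prop) (Rbox : G → M → Prop) (Rdia : M → G → Prop)
  (V : P → Concept G M I)

/-- The semantic target set of positions. -/
def semT : Set (GamePos G M P) :=
  {p | match p with
    | GamePos.obj g φ => g ∈ (NDForm.sem I Rbox Rdia V φ).1
    | GamePos.att m φ => m ∉ (NDForm.sem I Rbox Rdia V φ).2}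

@[simp] lemma mem_semT_obj (g : G) (φ : NDForm P) :
    GamePos.obj g φ ∈ semT I Rbox Rdia V ↔ g ∈ (NDForm.sem I Rbox Rdia V φ).1 := Iff.rfl

@[simp] lemma mem_semT_att (m : M) (φ : NDForm P) :
    GamePos.att m φ ∈ semT I Rbox Rdia V ↔ m ∉ (NDForm.sem I Rbox Rdia V φ).2 := Iff.rfl

@[simp] lemma mem_gameOp_obj (W : Set (GamePos G M P)) (g : G) (φ : NDForm P) :
    GamePos.obj g φ ∈ GamePos.gameOp I Rbox Rdia V W ↔
      ∀ q ∈ GamePos.moves I Rbox Rdia V (GamePos.obj g φ), q ∈ W := Iff.rfl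

@[simp] lemma mem_gameOp_att (W : Set (GamePos G M P)) (m : M) (φ : NDForm P) :
    GamePos.att m φ ∈ GamePos.gameOp I Rbox Rdia V W ↔
      ∃ q ∈ GamePos.moves I Rbox Rdia V (GamePos.att m φ), q ∈ W := Iff.rfl

lemma concept_not_mem_fst (c : Concept G M I) {g : G} (h : g ∉ c.extent) :
    ∃ m ∈ c.intent, ¬ I g m := by
  rw [← c.lowerPolar_intent] at h
  by_contra hc
  push_neg at hc
  exact h fun m hm => hc m hm

lemma concept_not_mem_snd (c : Concept G M I) {m : M} (h : m ∉ c.intent) :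
    ∃ g ∈ c.extent, ¬ I g m := by
  rw [← c.upperPolar_extent] at h
  by_contra hc
  push_neg at hc
  exact h fun g hg => hc g hg

/-- The semantic set is a fixed point of the game operator. -/
lemma semT_fixed :
    GamePos.gameOp I Rbox Rdia V (semT I Rbox Rdia V : Set (GamePos G M P))
      = semT I Rbox Rdia V := by
  ext p
  obtain (⟨g, φ⟩ | ⟨m, φ⟩) := p
  · cases φ with
    | bot =>
      simp only [mem_gameOp_obj, GamePos.moves, Set.mem_setOf_eq, mem_semT_obj, NDForm.sem]
      constructor
      · intro h m
        by_contra hI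
        exact h _ ⟨m, hI, rfl⟩ (Set.mem_univ m)
      · intro h q ⟨m, hI, _⟩
        exact absurd (h m) hI
    | top => simp [GamePos.moves, NDForm.sem]
    | atom p =>
      by_cases hg : g ∈ (V p).extent
      · simp [GamePos.moves, NDForm.sem, hg]
      · simp only [mem_gameOp_obj, GamePos.moves, Set.mem_setOf_eq, mem_semT_obj,
          mem_semT_att, NDForm.sem, hg, iff_false]
        intro h
        obtain ⟨m, hm, hI⟩ := concept_not_mem_fst I (V p) hg
        exact h _ ⟨not_false, m, hI, rfl⟩ hm
    | and φ ψ =>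
      simp only [mem_gameOp_obj, GamePos.moves, mem_semT_obj, NDForm.sem]
      constructor
      · intro h
        exact ⟨h _ (Set.mem_insert _ _), h _ (Set.mem_insert_iff.2 (Or.inr rfl))⟩
      · rintro h q (rfl | rfl) <;> simp_all
    | or φ ψ =>
      simp only [mem_gameOp_obj, GamePos.moves, Set.mem_setOf_eq, mem_semT_obj,
        mem_semT_att, NDForm.sem]
      constructor
      · intro h m hm
        by_contra hI
        exact h _ ⟨m, hI, rfl⟩ hm
      · rintro h q ⟨m, hI, rfl⟩ hm
        exact hI (h m hm)
    | box φ =>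
      simp only [mem_gameOp_obj, GamePos.moves, Set.mem_setOf_eq, mem_semT_obj,
        mem_semT_att, NDForm.sem]
      constructor
      · intro h m hm
        by_contra hR
        exact h _ ⟨m, hR, rfl⟩ hm
      · rintro h q ⟨m, hR, rfl⟩ hm
        exact hR (h m hm)
    | dia φ =>
      simp only [mem_gameOp_obj, GamePos.moves, Set.mem_setOf_eq, mem_semT_obj,
        mem_semT_att, NDForm.sem]
      constructor
      · intro h m hm
        by_contra hI
        exact h _ ⟨m, hI, rfl⟩ hm
      · rintro h q ⟨m, hI, rfl⟩ hm
        exact hI (h m hm)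
  · cases φ with
    | bot => simp [GamePos.moves, NDForm.sem]
    | top =>
      simp only [mem_gameOp_att, GamePos.moves, Set.mem_setOf_eq, mem_semT_obj,
        mem_semT_att, NDForm.sem]
      constructor
      · rintro ⟨q, ⟨g, hI, rfl⟩, -⟩ h
        exact hI (h g)
      · intro h
        push_neg at h
        obtain ⟨g, hg⟩ := h
        exact ⟨_, ⟨g, hg, rfl⟩, Set.mem_univ g⟩
    | atom p =>
      by_cases hm : m ∈ (V p).intent
      · simp only [mem_gameOp_att, GamePos.moves, Set.mem_setOf_eq, mem_semT_att,
          NDForm.sem, hm, not_true_eq_false, iff_false]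
        rintro ⟨q, ⟨hm', -⟩, -⟩
        exact hm'
      · simp only [mem_gameOp_att, GamePos.moves, Set.mem_setOf_eq, mem_semT_obj,
          mem_semT_att, NDForm.sem, hm, not_false_eq_true, iff_true]
        obtain ⟨g, hg, hI⟩ := concept_not_mem_snd I (V p) hm
        exact ⟨_, ⟨trivial, g, hI, rfl⟩, hg⟩
    | and φ ψ =>
      simp only [mem_gameOp_att, GamePos.moves, Set.mem_setOf_eq, mem_semT_obj,
        mem_semT_att, NDForm.sem]
      constructor
      · rintro ⟨q, ⟨g, hI, rfl⟩, hg⟩ h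
        exact hI (h g hg)
      · intro h
        push_neg at h
        obtain ⟨g, hg, hI⟩ := h
        exact ⟨_, ⟨g, hI, rfl⟩, hg⟩
    | or φ ψ =>
      simp only [mem_gameOp_att, GamePos.moves, mem_semT_att, NDForm.sem]
      constructor
      · rintro ⟨q, (rfl | rfl), hq⟩ h
        · exact hq h.1
        · exact hq h.2
      · intro h
        rcases (not_and_or.1 (by simpa [Set.mem_inter_iff] using h)) with h1 | h1
        · exact ⟨_, Set.mem_insert _ _, h1⟩
        · exact ⟨_, Set.mem_insert_iff.2 (Or.inr rfl), h1⟩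
    | box φ =>
      simp only [mem_gameOp_att, GamePos.moves, Set.mem_setOf_eq, mem_semT_obj,
        mem_semT_att, NDForm.sem]
      constructor
      · rintro ⟨q, ⟨g, hI, rfl⟩, hg⟩ h
        exact hI (h g hg)
      · intro h
        push_neg at h
        obtain ⟨g, hg, hI⟩ := h
        exact ⟨_, ⟨g, hI, rfl⟩, hg⟩
    | dia φ =>
      simp only [mem_gameOp_att, GamePos.moves, Set.mem_setOf_eq, mem_semT_obj,
        mem_semT_att, NDForm.sem]
      constructor
      · rintro ⟨q, ⟨g, hR, rfl⟩, hg⟩ h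
        exact hR (h g hg)
      · intro h
        push_neg at h
        obtain ⟨g, hg, hR⟩ := h
        exact ⟨_, ⟨g, hR, rfl⟩, hg⟩

/-- Semantically winning positions belong to any fixed point of the game operator. -/
lemma sem_mem_fixed {Win : Set (GamePos G M P)}
    (hfix : GamePos.gameOp I Rbox Rdia V Win = Win) (φ : NDForm P) :
    (∀ g : G, g ∈ (NDForm.sem I Rbox Rdia V φ).1 → GamePos.obj g φ ∈ Win) ∧
    (∀ m : M, m ∉ (NDForm.sem I Rbox Rdia V φ).2 → GamePos.att m φ ∈ Win) := by
  have key : ∀ p : GamePos G M P,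
      p ∈ GamePos.gameOp I Rbox Rdia V Win → p ∈ Win := fun p hp => hfix ▸ hp
  induction φ with
  | bot =>
    constructor
    · intro g hg
      refine key _ ?_
      rintro q ⟨m, hI, rfl⟩
      exact absurd (hg m) hI
    · intro m hm
      exact absurd (Set.mem_univ m) hm
  | top =>
    have ha : ∀ g : G, GamePos.obj g (NDForm.top : NDForm P) ∈ Win := by
      intro g
      refine key _ ?_
      rintro q hq
      simp [GamePos.moves] at hq
    refine ⟨fun g _ => ha g, fun m hm => key _ ?_⟩
    have : ¬ ∀ g, I g m := hm
    push_neg at this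
    obtain ⟨g, hg⟩ := this
    exact ⟨_, ⟨g, hg, rfl⟩, ha g⟩
  | atom p =>
    have ha : ∀ g : G, g ∈ (V p).extent → GamePos.obj g (NDForm.atom p) ∈ Win := by
      intro g hg
      refine key _ ?_
      rintro q ⟨hg', -⟩
      exact absurd hg hg'
    refine ⟨ha, fun m hm => key _ ?_⟩
    obtain ⟨g, hg, hI⟩ := concept_not_mem_snd I (V p) hm
    exact ⟨_, ⟨hm, g, hI, rfl⟩, ha g hg⟩
  | and φ ψ ihφ ihψ =>
    have ha : ∀ g : G, g ∈ (NDForm.sem I Rbox Rdia V (φ.and ψ)).1 →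
        GamePos.obj g (φ.and ψ) ∈ Win := by
      intro g hg
      refine key _ ?_
      rintro q (rfl | rfl)
      · exact ihφ.1 g hg.1
      · exact ihψ.1 g hg.2
    refine ⟨ha, fun m hm => key _ ?_⟩
    have : ¬ ∀ g ∈ (NDForm.sem I Rbox Rdia V φ).1 ∩ (NDForm.sem I Rbox Rdia V ψ).1,
        I g m := hm
    push_neg at this
    obtain ⟨g, hg, hI⟩ := this
    exact ⟨_, ⟨g, hI, rfl⟩, ha g hg⟩
  | or φ ψ ihφ ihψ =>
    have hb : ∀ m : M, m ∉ (NDForm.sem I Rbox Rdia V (φ.or ψ)).2 →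
        GamePos.att m (φ.or ψ) ∈ Win := by
      intro m hm
      refine key _ ?_
      rcases (not_and_or.1 (by simpa [NDForm.sem, Set.mem_inter_iff] using hm)) with h1 | h1
      · exact ⟨_, Set.mem_insert _ _, ihφ.2 m h1⟩
      · exact ⟨_, Set.mem_insert_iff.2 (Or.inr rfl), ihψ.2 m h1⟩
    refine ⟨fun g hg => key _ ?_, hb⟩
    rintro q ⟨m, hI, rfl⟩
    refine hb m fun hm => hI (hg m hm)
  | box φ ihφ =>
    have ha : ∀ g : G, g ∈ (NDForm.sem I Rbox Rdia V φ.box).1 →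
        GamePos.obj g φ.box ∈ Win := by
      intro g hg
      refine key _ ?_
      rintro q ⟨m, hR, rfl⟩
      exact ihφ.2 m fun hm => hR (hg m hm)
    refine ⟨ha, fun m hm => key _ ?_⟩
    have : ¬ ∀ g, (∀ m' ∈ (NDForm.sem I Rbox Rdia V φ).2, Rbox g m') → I g m := hm
    push_neg at this
    obtain ⟨g, hg, hI⟩ := this
    exact ⟨_, ⟨g, hI, rfl⟩, ha g hg⟩
  | dia φ ihφ =>
    have hb : ∀ m : M, m ∉ (NDForm.sem I Rbox Rdia V φ.dia).2 →
        GamePos.att m φ.dia ∈ Win := by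
      intro m hm
      refine key _ ?_
      have : ¬ ∀ g ∈ (NDForm.sem I Rbox Rdia V φ).1, Rdia m g := hm
      push_neg at this
      obtain ⟨g, hg, hR⟩ := this
      exact ⟨_, ⟨g, hR, rfl⟩, ihφ.1 g hg⟩
    refine ⟨fun g hg => key _ ?_, hb⟩
    rintro q ⟨m, hI, rfl⟩
    exact hb m fun hm => hI (hg m hm)

end Aux
/-- In a polarity-based model for the basic non-distributive modal logic,
let `Win` be the least fixed point of the monotone game operator. Then for every formula
`φ`: `(g, φ) ∈ Win` iff `g ⊩ φ`, and `(m, φ) ∈ Win` iff `m ⊁ φ`. -/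
theorem game_semantics_adequacy {P G M : Type*}
    (I : G → M → Prop) (Rbox : G → M → Prop) (Rdia : M → G → Prop)
    (hcompBox0 : ∀ m : M,
      lowerPolar I (upperPolar I (lowerPolar Rbox {m})) = lowerPolar Rbox {m})
    (hcompBox1 : ∀ g : G,
      upperPolar I (lowerPolar I (upperPolar Rbox {g})) = upperPolar Rbox {g})
    (hcompDia0 : ∀ g : G,
      upperPolar I (lowerPolar I (lowerPolar Rdia {g})) = lowerPolar Rdia {g})
    (hcompDia1 : ∀ m : M,
      lowerPolar I (upperPolar I (upperPolar Rdia {m})) = upperPolar Rdia {m})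
    (V : P → Concept G M I) (Win : Set (GamePos G M P))
    (hWin : IsLeast {W | GamePos.gameOp I Rbox Rdia V W = W} Win) :
    ∀ φ : NDForm P,
      (∀ g : G, GamePos.obj g φ ∈ Win ↔ g ∈ (NDForm.sem I Rbox Rdia V φ).1) ∧
      (∀ m : M, GamePos.att m φ ∈ Win ↔ m ∉ (NDForm.sem I Rbox Rdia V φ).2) := by
  intro φ
  have hsub : Win ⊆ semT I Rbox Rdia V := hWin.2 (semT_fixed I Rbox Rdia V)
  have hmem := sem_mem_fixed I Rbox Rdia V hWin.1 φ
  exact ⟨fun g => ⟨fun h => hsub h, hmem.1 g⟩, fun m => ⟨fun h => hsub h, hmem.2 m⟩⟩
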